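/- For any tree T with at least two vertices, the general position number of T equals the number of leaves of T. -/

import Mathlib

open SimpleGraph
namespace TreeGP
variable {V : Type*} {G : SimpleGraph V}

noncomputable def pth (hT : G.IsTree) (u v : V) : G.Walk u v :=
  (hT.existsUnique_path u v).choose

lemma pth_isPath (hT : G.IsTree) (u v : V) : (pth hT u v).IsPath :=
  (hT.existsUnique_path u v).choose_spec.1

lemma pth_eq (hT : G.IsTree) {u v : V} (p : G.Walk u v) (hp : p.IsPath) : p = pth hT u v :=
  (hT.existsUnique_path u v).choose_spec.2 p hp

section DecEq
variable [DecidableEq V]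

lemma length_eq_dist (hT : G.IsTree) {u v : V} (p : G.Walk u v) (hp : p.IsPath) :
    p.length = G.dist u v := by
  obtain ⟨q, hq⟩ := hT.isConnected.exists_walk_length_eq_dist u v
  have h1 : p = q.bypass := (pth_eq hT p hp).trans (pth_eq hT q.bypass q.bypass_isPath).symm
  have h2 := q.length_bypass_le
  have h3 := SimpleGraph.dist_le p
  rw [h1]; exact le_antisymm (hq ▸ h2) (h1 ▸ h3)

lemma pth_triangle (hT : G.IsTree) (x y z : V) {w : V} (hw : w ∈ (pth hT x z).support) :
    w ∈ (pth hT x y).support ∨ w ∈ (pth hT y z).support := by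
  have hb : ((pth hT x y).append (pth hT y z)).bypass = pth hT x z :=
    pth_eq hT _ (Walk.bypass_isPath _)
  rw [← hb] at hw
  have := Walk.support_bypass_subset _ hw
  rwa [Walk.mem_support_append_iff] at this

omit [DecidableEq V] in
lemma isPath_concat {u v w : V} {p : G.Walk u v} (hp : p.IsPath) (h : G.Adj v w)
    (hw : w ∉ p.support) : (p.concat h).IsPath := by
  rw [Walk.isPath_def, Walk.support_concat, List.nodup_append]
  refine ⟨hp.support_nodup, List.nodup_singleton _, ?_⟩
  intro a ha b hb
  simp only [List.mem_singleton] at hb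
  subst hb; exact fun hab => hw (hab ▸ ha)

lemma cons_decomp (hT : G.IsTree) {s a v : V} {p : G.Walk s v} (hp : p.IsPath) (h : G.Adj s a)
    (ha : a ∈ p.support) : p = Walk.cons h (p.dropUntil a ha) := by
  have hsingle : (Walk.cons h (Walk.nil : G.Walk a a)).IsPath := by
    rw [Walk.cons_isPath_iff]
    exact ⟨Walk.IsPath.nil, by simp [h.ne]⟩
  have h1 : p.takeUntil a ha = Walk.cons h Walk.nil :=
    (pth_eq hT _ (hp.takeUntil ha)).trans (pth_eq hT _ hsingle).symm
  conv_lhs => rw [← p.take_spec ha]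
  rw [h1, Walk.cons_append, Walk.nil_append]

lemma second_unique (hT : G.IsTree) {s v z1 z2 : V} {p : G.Walk s v} (hp : p.IsPath)
    (h1 : G.Adj s z1) (h2 : G.Adj s z2) (m1 : z1 ∈ p.support) (m2 : z2 ∈ p.support) :
    z1 = z2 := by
  have e1 := cons_decomp hT hp h1 m1
  have e2 := cons_decomp hT hp h2 m2
  have a1 : p.getVert 1 = z1 := by
    conv_lhs => rw [e1]
    exact (Walk.getVert_cons_succ (n := 0) _ _).trans (Walk.getVert_zero _)
  have a2 : p.getVert 1 = z2 := by
    conv_lhs => rw [e2]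
    exact (Walk.getVert_cons_succ (n := 0) _ _).trans (Walk.getVert_zero _)
  rw [← a1, a2]

lemma last_unique (hT : G.IsTree) {s v z1 z2 : V} {p : G.Walk s v} (hp : p.IsPath)
    (h1 : G.Adj v z1) (h2 : G.Adj v z2) (m1 : z1 ∈ p.support) (m2 : z2 ∈ p.support) :
    z1 = z2 := by
  refine second_unique hT hp.reverse h1 h2 ?_ ?_ <;>
    rw [Walk.support_reverse, List.mem_reverse] <;> assumption

end DecEq

lemma two_le_degree_internal [Fintype V] [DecidableRel G.Adj] {u v x : V}
    (p : G.Walk u v) : p.IsPath → x ∈ p.support → x ≠ u → x ≠ v → 2 ≤ G.degree x := by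
  induction p with
  | nil => intro _ hx hxu _; simp only [Walk.support_nil, List.mem_singleton] at hx
           exact absurd hx hxu
  | @cons a b c h q ih =>
    intro hp hx hxu hxv
    rw [Walk.support_cons, List.mem_cons] at hx
    rcases hx with rfl | hx
    · exact absurd rfl hxu
    by_cases hxb : x = b
    · subst hxb
      cases q with
      | nil => exact absurd rfl hxv
      | @cons b' c' cend h' q' =>
        have hmem1 : a ∈ G.neighborFinset x := by rw [mem_neighborFinset]; exact h.symm
        have hmem2 : c' ∈ G.neighborFinset x := by rw [mem_neighborFinset]; exact h'
        have hac : a ≠ c' := by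
          rintro rfl
          rw [Walk.cons_isPath_iff] at hp
          exact hp.2 (by rw [Walk.support_cons]; exact List.mem_cons_of_mem _ q'.start_mem_support)
        exact Finset.one_lt_card.mpr ⟨a, hmem1, c', hmem2, hac⟩
    · rw [Walk.cons_isPath_iff] at hp
      exact ih hp.1 hx hxb hxv

lemma degree_pos [Fintype V] [DecidableRel G.Adj] (hT : G.IsTree)
    (h2 : 2 ≤ Fintype.card V) (v : V) : 0 < G.degree v := by
  obtain ⟨w, hw⟩ := Fintype.exists_ne_of_one_lt_card (by omega) v
  rw [G.degree_pos_iff_exists_adj]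
  have p : G.Walk v w := (hT.isConnected v w).some
  cases p with
  | nil => exact absurd rfl hw
  | cons h q => exact ⟨_, h⟩

lemma mem_support_concat {u v w x : V} {p : G.Walk u v} (h : G.Adj v w)
    (hx : x ∈ p.support) : x ∈ (p.concat h).support := by
  rw [Walk.support_concat]
  exact List.mem_append_left _ hx

end TreeGP

open SimpleGraph

/-- A walk is an *induced (monophonic) path* if it is a path and vertices on the
walk are adjacent in `G` exactly when they are consecutive on the walk. -/
def IsInducedPathW {V : Type*} (G : SimpleGraph V) {u v : V} (p : G.Walk u v) : Prop :=
  p.IsPath ∧ ∀ a b : V, a ∈ p.support → b ∈ p.support → (G.Adj a b ↔ p.toSubgraph.Adj a b)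

/-- A walk is a *geodesic* if it is a shortest path between its endpoints. -/
def IsGeodesicW {V : Type*} (G : SimpleGraph V) {u v : V} (p : G.Walk u v) : Prop :=
  p.IsPath ∧ p.length = G.dist u v

/-- A set of vertices is in *monophonic position* if no induced path of `G`
contains more than two of its vertices. -/
def IsMpSet {V : Type*} (G : SimpleGraph V) (S : Set V) : Prop :=
  ∀ ⦃u v : V⦄ (p : G.Walk u v), IsInducedPathW G p → (S ∩ {x | x ∈ p.support}).ncard ≤ 2

/-- A set of vertices is in *general position* if no geodesic of `G` contains
more than two of its vertices. -/
def IsGpSet {V : Type*} (G : SimpleGraph V) (S : Set V) : Prop :=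
  ∀ ⦃u v : V⦄ (p : G.Walk u v), IsGeodesicW G p → (S ∩ {x | x ∈ p.support}).ncard ≤ 2

/-- The monophonic position number `mp(G)`. -/
noncomputable def mpNum {V : Type*} (G : SimpleGraph V) : ℕ :=
  sSup {n | ∃ S : Set V, IsMpSet G S ∧ S.ncard = n}

/-- The general position number `gp(G)`. -/
noncomputable def gpNum {V : Type*} (G : SimpleGraph V) : ℕ :=
  sSup {n | ∃ S : Set V, IsGpSet G S ∧ S.ncard = n}

theorem tree_gp_eq_leaves {V : Type*} [Fintype V] [DecidableEq V]
    (G : SimpleGraph V) [DecidableRel G.Adj] (hT : G.IsTree) (h2 : 2 ≤ Fintype.card V) :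
    gpNum G = (Finset.univ.filter fun v => G.degree v = 1).card := by
  classical
  set L : Finset V := Finset.univ.filter (fun v => G.degree v = 1) with hLdef
  have hLset_card : (↑L : Set V).ncard = L.card := Set.ncard_coe_finset L
  have hLgp : IsGpSet G (↑L : Set V) := by
    intro u v p hgeo
    have hp := hgeo.1
    have hsub : (↑L : Set V) ∩ {x | x ∈ p.support} ⊆ {u, v} := by
      rintro x ⟨hx1, hx2⟩
      by_contra hx
      simp only [Set.mem_insert_iff, Set.mem_singleton_iff] at hx
      push_neg at hx
      have hge := TreeGP.two_le_degree_internal p hp hx2 hx.1 hx.2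
      have hxd : G.degree x = 1 := by simpa [hLdef] using hx1
      omega
    calc ((↑L : Set V) ∩ {x | x ∈ p.support}).ncard
        ≤ ({u, v} : Set V).ncard := Set.ncard_le_ncard hsub (Set.toFinite _)
      _ ≤ 2 := by
          rcases eq_or_ne u v with rfl | huv
          · simp
          · rw [Set.ncard_pair huv]
  have hub : ∀ n ∈ {n | ∃ S : Set V, IsGpSet G S ∧ S.ncard = n}, n ≤ L.card := by
    rintro n ⟨S, hS, rfl⟩
    have hkey : ∀ s ∈ S, G.degree s ≠ 1 → ∃ ℓ a : V, G.degree ℓ = 1 ∧ G.Adj s a ∧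
        a ∈ (TreeGP.pth hT s ℓ).support ∧ (∀ t ∈ S, t ≠ s → a ∉ (TreeGP.pth hT s t).support) ∧
        (∀ t ∈ S, t ∈ (TreeGP.pth hT s ℓ).support → t = s) := by
      intro s hsS hs1
      have hdeg2 : 1 < (G.neighborFinset s).card := by
        have h0 := TreeGP.degree_pos hT h2 s
        have hdd : G.degree s = (G.neighborFinset s).card := rfl
        omega
      have step1 : ∃ a, G.Adj s a ∧ ∀ t ∈ S, t ≠ s → a ∉ (TreeGP.pth hT s t).support := by
        by_contra hcon
        push_neg at hcon
        obtain ⟨a, ha, b, hb, hab⟩ := Finset.one_lt_card.mp hdeg2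
        rw [mem_neighborFinset] at ha hb
        obtain ⟨ta, htaS, htas, hta⟩ := hcon a ha
        obtain ⟨tb, htbS, htbs, htb⟩ := hcon b hb
        have hbnot : b ∉ (TreeGP.pth hT s ta).support := fun hbm =>
          hab (TreeGP.second_unique hT (TreeGP.pth_isPath hT s ta) ha hb hta hbm)
        have htatb : ta ≠ tb := by rintro rfl; exact hbnot htb
        have hq := TreeGP.pth_isPath hT ta tb
        have hsq : s ∈ (TreeGP.pth hT ta tb).support := by
          by_contra hsq
          have hbq : b ∈ (TreeGP.pth hT ta tb).support := by
            rcases TreeGP.pth_triangle hT s ta tb htb with h | h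
            · exact absurd h hbnot
            · exact h
          have ht2 : ((TreeGP.pth hT ta tb).takeUntil b hbq).IsPath := hq.takeUntil hbq
          have hsnot : s ∉ ((TreeGP.pth hT ta tb).takeUntil b hbq).support := fun h =>
            hsq ((TreeGP.pth hT ta tb).support_takeUntil_subset hbq h)
          have hr := TreeGP.isPath_concat ht2 hb.symm hsnot
          have heq : ((TreeGP.pth hT ta tb).takeUntil b hbq).concat hb.symm
              = (TreeGP.pth hT s ta).reverse :=
            (TreeGP.pth_eq hT _ hr).trans
              (TreeGP.pth_eq hT _ (TreeGP.pth_isPath hT s ta).reverse).symm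
          have hbm : b ∈ (TreeGP.pth hT s ta).reverse.support := by
            rw [← heq]
            exact TreeGP.mem_support_concat _ (Walk.end_mem_support _)
          rw [Walk.support_reverse, List.mem_reverse] at hbm
          exact hbnot hbm
        have hgeo : IsGeodesicW G (TreeGP.pth hT ta tb) :=
          ⟨hq, TreeGP.length_eq_dist hT _ hq⟩
        have hle := hS (TreeGP.pth hT ta tb) hgeo
        have h3sub : ({ta, s, tb} : Set V) ⊆ S ∩ {x | x ∈ (TreeGP.pth hT ta tb).support} := by
          rintro x hx
          simp only [Set.mem_insert_iff, Set.mem_singleton_iff] at hx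
          rcases hx with rfl | rfl | rfl
          · exact ⟨htaS, Walk.start_mem_support _⟩
          · exact ⟨hsS, hsq⟩
          · exact ⟨htbS, Walk.end_mem_support _⟩
        have h3 : ({ta, s, tb} : Set V).ncard = 3 := by
          rw [Set.ncard_insert_of_notMem (by simp [htas, htatb]),
            Set.ncard_pair (Ne.symm htbs)]
        have hmono := Set.ncard_le_ncard h3sub (Set.toFinite _)
        omega
      obtain ⟨a, hadj, hgood⟩ := step1
      have hWne : (Finset.univ.filter fun x => a ∈ (TreeGP.pth hT s x).support).Nonempty := by
        refine ⟨a, ?_⟩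
        simp only [Finset.mem_filter, Finset.mem_univ, true_and]
        exact Walk.end_mem_support _
      obtain ⟨ℓ, hℓmem', hℓmax⟩ :=
        Finset.exists_max_image _ (fun x => (TreeGP.pth hT s x).length) hWne
      simp only [Finset.mem_filter, Finset.mem_univ, true_and] at hℓmem'
      have hℓdeg : G.degree ℓ = 1 := by
        by_contra hne1
        have hd2 : 1 < (G.neighborFinset ℓ).card := by
          have h0 := TreeGP.degree_pos hT h2 ℓ
          have hdd : G.degree ℓ = (G.neighborFinset ℓ).card := rfl
          omega
        obtain ⟨z1, hz1, z2, hz2, hz12⟩ := Finset.one_lt_card.mp hd2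
        rw [mem_neighborFinset] at hz1 hz2
        have hpℓ := TreeGP.pth_isPath hT s ℓ
        obtain ⟨z, hzadj, hznot⟩ : ∃ z, G.Adj ℓ z ∧ z ∉ (TreeGP.pth hT s ℓ).support := by
          by_cases hm : z1 ∈ (TreeGP.pth hT s ℓ).support
          · refine ⟨z2, hz2, fun hm2 => hz12 ?_⟩
            exact TreeGP.last_unique hT hpℓ hz1 hz2 hm hm2
          · exact ⟨z1, hz1, hm⟩
        have hcp := TreeGP.isPath_concat hpℓ hzadj hznot
        have heq : (TreeGP.pth hT s ℓ).concat hzadj = TreeGP.pth hT s z :=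
          TreeGP.pth_eq hT _ hcp
        have hzW : a ∈ (TreeGP.pth hT s z).support := by
          rw [← heq]
          exact TreeGP.mem_support_concat _ hℓmem'
        have hlen := hℓmax z (by
          simp only [Finset.mem_filter, Finset.mem_univ, true_and]; exact hzW)
        rw [← heq, Walk.length_concat] at hlen
        omega
      refine ⟨ℓ, a, hℓdeg, hadj, hℓmem', hgood, ?_⟩
      intro t htS htsupp
      by_contra hts
      have hd := TreeGP.cons_decomp hT (TreeGP.pth_isPath hT s ℓ) hadj hℓmem'
      have hdp : (Walk.cons hadj ((TreeGP.pth hT s ℓ).dropUntil a hℓmem')).IsPath := by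
        rw [← hd]; exact TreeGP.pth_isPath hT s ℓ
      rw [Walk.cons_isPath_iff] at hdp
      have htd : t ∈ ((TreeGP.pth hT s ℓ).dropUntil a hℓmem').support := by
        rw [hd, Walk.support_cons, List.mem_cons] at htsupp
        rcases htsupp with rfl | h
        · exact absurd rfl hts
        · exact h
      have ht2 : (((TreeGP.pth hT s ℓ).dropUntil a hℓmem').takeUntil t htd).IsPath :=
        hdp.1.takeUntil htd
      have hsnot : s ∉ (((TreeGP.pth hT s ℓ).dropUntil a hℓmem').takeUntil t htd).support :=
        fun h => hdp.2 (Walk.support_takeUntil_subset _ htd h)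
      have hcons :
          (Walk.cons hadj (((TreeGP.pth hT s ℓ).dropUntil a hℓmem').takeUntil t htd)).IsPath := by
        rw [Walk.cons_isPath_iff]; exact ⟨ht2, hsnot⟩
      have heq2 := TreeGP.pth_eq hT _ hcons
      have hmm : a ∈ (TreeGP.pth hT s t).support := by
        rw [← heq2, Walk.support_cons]
        exact List.mem_cons_of_mem _ (Walk.start_mem_support _)
      exact hgood t htS hts hmm
    have hex : ∀ s : V, ∃ la : V × V,
        (s ∈ S ∧ G.degree s ≠ 1 → G.degree la.1 = 1 ∧ G.Adj s la.2 ∧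
          la.2 ∈ (TreeGP.pth hT s la.1).support ∧
          (∀ t ∈ S, t ≠ s → la.2 ∉ (TreeGP.pth hT s t).support) ∧
          (∀ t ∈ S, t ∈ (TreeGP.pth hT s la.1).support → t = s)) ∧
        (¬(s ∈ S ∧ G.degree s ≠ 1) → la.1 = s) := by
      intro s
      by_cases h : s ∈ S ∧ G.degree s ≠ 1
      · obtain ⟨ℓ, a, hh⟩ := hkey s h.1 h.2
        exact ⟨(ℓ, a), fun _ => hh, fun hc => absurd h hc⟩
      · exact ⟨(s, s), fun hc => absurd hc h, fun _ => rfl⟩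
    choose F hF1 hF2 using hex
    have himg : ∀ s ∈ S, (F s).1 ∈ (↑L : Set V) := by
      intro s hs
      by_cases hdeg : G.degree s = 1
      · have hfs : (F s).1 = s := hF2 s (fun hc => hc.2 hdeg)
        rw [hfs]
        simp [hLdef, hdeg]
      · have hd1 := (hF1 s ⟨hs, hdeg⟩).1
        simp [hLdef, hd1]
    have hinj : Set.InjOn (fun s => (F s).1) S := by
      intro s hs s' hs' hf
      simp only at hf
      by_cases hdeg : G.degree s = 1 <;> by_cases hdeg' : G.degree s' = 1
      · rw [hF2 s (fun hc => hc.2 hdeg), hF2 s' (fun hc => hc.2 hdeg')] at hf; exact hf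
      · obtain ⟨_, _, _, _, hcov'⟩ := hF1 s' ⟨hs', hdeg'⟩
        have hfs : (F s).1 = s := hF2 s (fun hc => hc.2 hdeg)
        rw [hfs] at hf
        exact hcov' s hs (by rw [← hf]; exact Walk.end_mem_support _)
      · obtain ⟨_, _, _, _, hcov⟩ := hF1 s ⟨hs, hdeg⟩
        have hfs' : (F s').1 = s' := hF2 s' (fun hc => hc.2 hdeg')
        rw [hfs'] at hf
        exact (hcov s' hs' (by rw [hf]; exact Walk.end_mem_support _)).symm
      · by_contra hne
        obtain ⟨hd1, hadj, hmem, hgood, hcov⟩ := hF1 s ⟨hs, hdeg⟩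
        obtain ⟨hd1', hadj', hmem', hgood', hcov'⟩ := hF1 s' ⟨hs', hdeg'⟩
        rw [← hf] at hcov' hmem' hd1'
        have h1 : (F s).2 ∈ (TreeGP.pth hT s' (F s).1).support := by
          rcases TreeGP.pth_triangle hT s s' (F s).1 hmem with h | h
          · exact absurd h (hgood s' hs' (Ne.symm hne))
          · exact h
        have hq := TreeGP.pth_isPath hT s' (F s).1
        by_cases hst : s ∈ ((TreeGP.pth hT s' (F s).1).takeUntil (F s).2 h1).support
        · exact hne (hcov' s hs (Walk.support_takeUntil_subset _ h1 hst))
        · have hcp := TreeGP.isPath_concat (hq.takeUntil h1) hadj.symm hst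
          have heq : ((TreeGP.pth hT s' (F s).1).takeUntil (F s).2 h1).concat hadj.symm
              = (TreeGP.pth hT s s').reverse :=
            (TreeGP.pth_eq hT _ hcp).trans
              (TreeGP.pth_eq hT _ (TreeGP.pth_isPath hT s s').reverse).symm
          have hmem2 : (F s).2 ∈ (TreeGP.pth hT s s').support := by
            have hmm : (F s).2 ∈
                (((TreeGP.pth hT s' (F s).1).takeUntil (F s).2 h1).concat hadj.symm).support := by
              exact TreeGP.mem_support_concat _ (Walk.end_mem_support _)
            rw [heq, Walk.support_reverse, List.mem_reverse] at hmm
            exact hmm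
          exact absurd hmem2 (hgood s' hs' (Ne.symm hne))
    have h1 : ((fun s => (F s).1) '' S).ncard ≤ (↑L : Set V).ncard :=
      Set.ncard_le_ncard (fun x ⟨s, hs, hxs⟩ => hxs ▸ himg s hs) (Set.toFinite _)
    rw [Set.ncard_image_of_injOn hinj] at h1
    exact hLset_card ▸ h1
  rw [gpNum]
  apply le_antisymm
  · exact csSup_le ⟨0, ∅, fun u v p _ => by simp, by simp⟩ hub
  · exact le_csSup ⟨L.card, fun n hn => hub n hn⟩ ⟨↑L, hLgp, hLset_card⟩
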